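/- Let L_B be the weighted Laplacian matrix with entries L_B[i][j] = −V_i V_j b_{ij} cos(θ_i − θ_j) for i ≠ j and diagonal entries L_B[i][i] = Σ_{l≠i} V_i V_l b_{il} cos(θ_i − θ_l), where b_{ij} = b_{ji} ≥ 0, 0 < V_i ≤ V_max,i, and |θ_i − θ_j| < π/2 whenever b_{ij} > 0. Define γ_i = 2 Σ_j V_max,i V_max,j b_{ij} and Γ = diag(γ₁,…,γₙ). Then 0 ⪯ Γ^{−1/2} L_B Γ^{−1/2} ⪯ I (assuming all γ_i > 0). -/

import Mathlib

open Matrix Finset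

lemma quad_key4 {n : ℕ} (w : Fin n → Fin n → ℝ) (hsym : ∀ i j, w i j = w j i) (y : Fin n → ℝ) :
    ∑ i, ∑ j, (if i = j then (∑ l, if l = i then (0:ℝ) else w i l) else -(w i j)) * y i * y j
    = (1/2) * ∑ i, ∑ j, w i j * (y i - y j)^2 := by
  have h1 : ∀ i : Fin n, ∑ j, (if i = j then (∑ l, if l = i then (0:ℝ) else w i l) else -(w i j)) * y i * y j
      = ∑ j, (w i j * (y i)^2 - w i j * (y i * y j)) := by
    intro i
    have hd : (∑ l, if l = i then (0:ℝ) else w i l) = (∑ l, w i l) - w i i := by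
      have h : ∀ l, (if l = i then (0:ℝ) else w i l) = w i l - (if l = i then w i i else 0) := by
        intro l; split_ifs with h
        · subst h; ring
        · ring
      simp only [h, Finset.sum_sub_distrib, Finset.sum_ite_eq', Finset.mem_univ, if_true]
    have hsplit : ∀ j, (if i = j then (∑ l, if l = i then (0:ℝ) else w i l) else -(w i j)) * y i * y j
        = (if j = i then ((∑ l, w i l) * y i * y j) else 0) + (-(w i j) * y i * y j) := by
      intro j
      by_cases h : i = j
      · subst h; simp [hd]; ring
      · simp [h, Ne.symm h]
    rw [Finset.sum_congr rfl (fun j _ => hsplit j), Finset.sum_add_distrib,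
      Finset.sum_ite_eq' Finset.univ i (fun j => (∑ l, w i l) * y i * y j)]
    simp only [Finset.mem_univ, if_true]
    have e1 : ∀ x : Fin n, -w i x * y i * y x = -(w i x * (y i * y x)) := fun x => by ring
    simp only [e1, Finset.sum_neg_distrib, Finset.sum_sub_distrib, ← Finset.sum_mul, pow_two]
    ring
  rw [Finset.sum_congr rfl (fun i _ => h1 i)]
  have hexp : ∀ i j : Fin n, w i j * (y i - y j)^2
      = w i j * (y i)^2 - 2 * (w i j * (y i * y j)) + w i j * (y j)^2 := by
    intro i j; ring
  have h2 : ∑ i, ∑ j, w i j * (y j)^2 = ∑ i, ∑ j, w i j * (y i)^2 := by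
    rw [Finset.sum_comm]
    apply Finset.sum_congr rfl; intro i _
    apply Finset.sum_congr rfl; intro j _
    rw [hsym]
  have hR : ∑ i, ∑ j, w i j * (y i - y j)^2
      = 2 * ∑ i, ∑ j, (w i j * (y i)^2 - w i j * (y i * y j)) := by
    simp only [hexp, Finset.sum_add_distrib, Finset.sum_sub_distrib, ← Finset.mul_sum, h2]
    ring
  rw [hR]
  ring

theorem stmt_4 {n : ℕ} (V Vmax θ : Fin n → ℝ) (b : Fin n → Fin n → ℝ)
    (hbsymm : ∀ i j, b i j = b j i) (hbnn : ∀ i j, 0 ≤ b i j)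
    (hV : ∀ i, 0 < V i) (hVmax : ∀ i, V i ≤ Vmax i)
    (hθ : ∀ i j, 0 < b i j → |θ i - θ j| < Real.pi / 2)
    (LB : Matrix (Fin n) (Fin n) ℝ)
    (hLB : ∀ i j, LB i j =
      if i = j then ∑ l, (if l = i then 0 else V i * V l * b i l * Real.cos (θ i - θ l))
      else -(V i * V j * b i j * Real.cos (θ i - θ j)))
    (γ : Fin n → ℝ)
    (hγdef : ∀ i, γ i = 2 * ∑ j, Vmax i * Vmax j * b i j)
    (hγpos : ∀ i, 0 < γ i)
    (M : Matrix (Fin n) (Fin n) ℝ)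
    (hM : ∀ i j, M i j = LB i j / (Real.sqrt (γ i) * Real.sqrt (γ j))) :
    M.PosSemidef ∧ ((1 : Matrix (Fin n) (Fin n) ℝ) - M).PosSemidef := by
  have hγnn : ∀ i, (0:ℝ) ≤ γ i := fun i => (hγpos i).le
  have hspos : ∀ i, 0 < Real.sqrt (γ i) := fun i => Real.sqrt_pos.mpr (hγpos i)
  set w : Fin n → Fin n → ℝ := fun i j => V i * V j * b i j * Real.cos (θ i - θ j) with hw
  have hwsym : ∀ i j, w i j = w j i := by
    intro i j
    show V i * V j * b i j * Real.cos (θ i - θ j) = V j * V i * b j i * Real.cos (θ j - θ i)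
    rw [hbsymm i j, ← Real.cos_neg (θ i - θ j), neg_sub]; ring
  have hwnn : ∀ i j, 0 ≤ w i j := by
    intro i j
    rcases eq_or_lt_of_le (hbnn i j) with h | h
    · simp only [hw]
      rw [← h]; simp
    · have habs := hθ i j h
      rw [abs_lt] at habs
      have hc : 0 < Real.cos (θ i - θ j) :=
        Real.cos_pos_of_mem_Ioo ⟨by linarith [habs.1], habs.2⟩
      have h1 := hV i; have h2 := hV j
      simp only [hw]
      positivity
  have hVmaxpos : ∀ i, 0 < Vmax i := fun i => lt_of_lt_of_le (hV i) (hVmax i)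
  have hwle : ∀ i j, w i j ≤ Vmax i * Vmax j * b i j := by
    intro i j
    have hc : Real.cos (θ i - θ j) ≤ 1 := Real.cos_le_one _
    have h1 : w i j ≤ V i * V j * b i j := by
      show V i * V j * b i j * Real.cos (θ i - θ j) ≤ V i * V j * b i j
      have hnn : 0 ≤ V i * V j * b i j := by
        have := hV i; have := hV j; have := hbnn i j; positivity
      exact mul_le_of_le_one_right hnn hc
    have h2 : V i * V j * b i j ≤ Vmax i * Vmax j * b i j := by
      apply mul_le_mul_of_nonneg_right _ (hbnn i j)
      exact mul_le_mul (hVmax i) (hVmax j) (hV j).le (hVmaxpos i).le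
    linarith
  have hLB' : ∀ i j, LB i j = if i = j then (∑ l, if l = i then (0:ℝ) else w i l) else -(w i j) := by
    intro i j; rw [hLB]
  have hLBsym : ∀ i j, LB i j = LB j i := by
    intro i j
    rw [hLB', hLB']
    by_cases h : i = j
    · subst h; rfl
    · simp only [h, Ne.symm h, if_false]
      rw [hwsym]
  have hMsym : M.IsHermitian := by
    ext i j
    simp only [Matrix.conjTranspose_apply, star_trivial]
    rw [hM, hM, hLBsym j i, mul_comm (Real.sqrt (γ j)) (Real.sqrt (γ i))]
  have hquad : ∀ x : Fin n → ℝ, dotProduct x (M *ᵥ x)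
      = (1/2) * ∑ i, ∑ j, w i j * (x i / Real.sqrt (γ i) - x j / Real.sqrt (γ j))^2 := by
    intro x
    have step1 : dotProduct x (M *ᵥ x)
        = ∑ i, ∑ j, (if i = j then (∑ l, if l = i then (0:ℝ) else w i l) else -(w i j)) *
            (x i / Real.sqrt (γ i)) * (x j / Real.sqrt (γ j)) := by
      simp only [dotProduct, mulVec, Finset.mul_sum]
      apply Finset.sum_congr rfl; intro i _
      apply Finset.sum_congr rfl; intro j _
      rw [hM, hLB' i j]
      have h1 := (hspos i).ne'
      have h2 := (hspos j).ne'
      by_cases h : i = j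
      · subst h; simp only [if_pos rfl]; field_simp
      · simp only [if_neg h]; field_simp
    rw [step1, quad_key4 w hwsym (fun i => x i / Real.sqrt (γ i))]
  constructor
  · refine Matrix.posSemidef_iff_dotProduct_mulVec.mpr ⟨hMsym, ?_⟩
    intro x
    rw [star_trivial, hquad x]
    apply mul_nonneg (by norm_num)
    apply Finset.sum_nonneg; intro i _
    apply Finset.sum_nonneg; intro j _
    exact mul_nonneg (hwnn i j) (sq_nonneg _)
  · refine Matrix.posSemidef_iff_dotProduct_mulVec.mpr ⟨Matrix.IsHermitian.sub Matrix.isHermitian_one hMsym, ?_⟩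
    intro x
    rw [star_trivial, Matrix.sub_mulVec, dotProduct_sub, Matrix.one_mulVec, hquad x]
    set y : Fin n → ℝ := fun i => x i / Real.sqrt (γ i) with hy
    have hxx : dotProduct x x = ∑ i, γ i * (y i)^2 := by
      apply Finset.sum_congr rfl; intro i _
      show x i * x i = γ i * (x i / Real.sqrt (γ i))^2
      have hne := (hγpos i).ne'
      rw [div_pow, Real.sq_sqrt (hγnn i)]
      field_simp
    have stepA : ∀ i j, w i j * (y i - y j)^2
        ≤ Vmax i * Vmax j * b i j * (2*(y i)^2 + 2*(y j)^2) := by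
      intro i j
      have hWnn : 0 ≤ Vmax i * Vmax j * b i j := by
        have := hVmaxpos i; have := hVmaxpos j; have := hbnn i j; positivity
      apply mul_le_mul (hwle i j) _ (sq_nonneg _) hWnn
      nlinarith [sq_nonneg (y i + y j)]
    have hBsum : ∑ i, ∑ j, Vmax i * Vmax j * b i j * (2*(y i)^2 + 2*(y j)^2)
        = 2 * ∑ i, γ i * (y i)^2 := by
      have e : ∀ i j : Fin n, Vmax i * Vmax j * b i j * (2*(y i)^2 + 2*(y j)^2)
          = 2*(Vmax i * Vmax j * b i j * (y i)^2) + 2*(Vmax i * Vmax j * b i j * (y j)^2) := by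
        intro i j; ring
      simp only [e, Finset.sum_add_distrib, ← Finset.mul_sum]
      have hswap : ∑ i, ∑ j, Vmax i * Vmax j * b i j * (y j)^2
          = ∑ i, ∑ j, Vmax i * Vmax j * b i j * (y i)^2 := by
        rw [Finset.sum_comm]
        apply Finset.sum_congr rfl; intro i _
        apply Finset.sum_congr rfl; intro j _
        rw [hbsymm j i]; ring
      rw [hswap]
      have hrow : ∀ i, ∑ j, Vmax i * Vmax j * b i j * (y i)^2 = γ i / 2 * (y i)^2 := by
        intro i
        rw [← Finset.sum_mul, hγdef i]; ring
      simp only [hrow]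
      have hT : ∑ i, γ i * (y i)^2 = 2 * ∑ i, γ i / 2 * (y i)^2 := by
        rw [Finset.mul_sum]
        apply Finset.sum_congr rfl; intro i _; ring
      rw [hT]; ring
    have hsumle : ∑ i, ∑ j, w i j * (y i - y j)^2
        ≤ ∑ i, ∑ j, Vmax i * Vmax j * b i j * (2*(y i)^2 + 2*(y j)^2) := by
      apply Finset.sum_le_sum; intro i _
      apply Finset.sum_le_sum; intro j _
      exact stepA i j
    rw [hxx]
    rw [hBsum] at hsumle
    linarith
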